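/- Ellipticity of the transition function e(0,b): let Λ, θ, γ, c be as in the context. Let I and I' be finite index sets, with integers m : I → ℤ, m' : I' → ℤ and complex numbers x : I → ℂ, x' : I' → ℂ, satisfying (i) Σ_{i∈I} m_i ≡ Σ_{i∈I'} m'_i (mod 2), (ii) Σ_{i∈I} m_i² = Σ_{i∈I'} (m'_i)², and (iii) Σ_{i∈I} m_i·x_i = Σ_{i∈I'} m'_i·x'_i. Then for every λ ∈ Λ and every z ∈ ℂ, ∏_{i∈I'} θ(x'_i + m'_i·(z + λ)) · ∏_{i∈I} θ(x_i + m_i·z) = ∏_{i∈I'} θ(x'_i + m'_i·z) · ∏_{i∈I} θ(x_i + m_i·(z + λ)). -/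

import Mathlib

theorem theta_iterate_aux (θ : ℂ → ℂ) (cl gl l : ℂ) (hcl : cl ≠ 0)
    (hfe : ∀ w : ℂ, θ (w + l) = cl * Complex.exp (gl * (w + l / 2)) * θ w) :
    ∀ n : ℤ, ∀ w : ℂ, θ (w + n * l) = cl ^ n * Complex.exp (n * gl * (w + n * l / 2)) * θ w := by
  have hneg : ∀ w : ℂ, θ (w - l) = cl⁻¹ * Complex.exp (-(gl * (w - l / 2))) * θ w := by
    intro w
    have h := hfe (w - l)
    rw [sub_add_cancel] at h
    rw [h, show cl⁻¹ * Complex.exp (-(gl * (w - l / 2))) *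
        (cl * Complex.exp (gl * (w - l + l / 2)) * θ (w - l)) =
        (cl⁻¹ * cl) * (Complex.exp (-(gl * (w - l / 2))) * Complex.exp (gl * (w - l + l / 2))) *
          θ (w - l) from by ring,
      ← Complex.exp_add, inv_mul_cancel₀ hcl,
      show -(gl * (w - l / 2)) + gl * (w - l + l / 2) = 0 from by ring, Complex.exp_zero]
    ring
  intro n
  induction n using Int.induction_on with
  | zero => intro w; simp
  | succ n ih =>
      intro w
      have harg : w + (((n : ℤ) + 1 : ℤ) : ℂ) * l = (w + ((n : ℤ) : ℂ) * l) + l := by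
        push_cast; ring
      rw [harg, hfe, ih, zpow_add_one₀ hcl,
        show (cl * Complex.exp (gl * (w + ((n:ℤ):ℂ) * l + l / 2)) *
            (cl ^ (n:ℤ) * Complex.exp (((n:ℤ):ℂ) * gl * (w + ((n:ℤ):ℂ) * l / 2)) * θ w)) =
          cl ^ (n:ℤ) * cl * (Complex.exp (gl * (w + ((n:ℤ):ℂ) * l + l / 2)) *
            Complex.exp (((n:ℤ):ℂ) * gl * (w + ((n:ℤ):ℂ) * l / 2))) * θ w from by ring,
        ← Complex.exp_add]
      congr 2
      push_cast
      ring
  | pred n ih =>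
      intro w
      have harg : w + ((-(n : ℤ) - 1 : ℤ) : ℂ) * l = (w + ((-(n : ℤ) : ℤ) : ℂ) * l) - l := by
        push_cast; ring
      rw [harg, hneg, ih,
        show (-(n:ℤ) - 1 : ℤ) = (-(n:ℤ)) + (-1) from by ring, zpow_add₀ hcl, zpow_neg_one,
        show (cl⁻¹ * Complex.exp (-(gl * (w + ((-(n:ℤ):ℤ):ℂ) * l - l / 2))) *
            (cl ^ (-(n:ℤ)) * Complex.exp (((-(n:ℤ):ℤ):ℂ) * gl * (w + ((-(n:ℤ):ℤ):ℂ) * l / 2)) * θ w)) =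
          cl ^ (-(n:ℤ)) * cl⁻¹ * (Complex.exp (-(gl * (w + ((-(n:ℤ):ℤ):ℂ) * l - l / 2))) *
            Complex.exp (((-(n:ℤ):ℤ):ℂ) * gl * (w + ((-(n:ℤ):ℤ):ℂ) * l / 2))) * θ w from by ring,
        ← Complex.exp_add]
      congr 2
      push_cast
      ring

theorem prod_zpow_sum_aux {J : Type*} (s : Finset J) (x : ℂ) (hx : x ≠ 0) (f : J → ℤ) :
    ∏ i ∈ s, x ^ f i = x ^ ∑ i ∈ s, f i := by
  classical
  induction s using Finset.induction with
  | empty => simp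
  | insert _ _ h ih => rw [Finset.prod_insert h, Finset.sum_insert h, zpow_add₀ hx, ih]

theorem prod_shift_aux (θ : ℂ → ℂ) (cl gl l : ℂ) (hcl : cl ≠ 0)
    (hfe : ∀ w : ℂ, θ (w + l) = cl * Complex.exp (gl * (w + l / 2)) * θ w)
    (J : Type*) [Fintype J] (mm : J → ℤ) (xx : J → ℂ) (z : ℂ) :
    ∏ i : J, θ (xx i + mm i * (z + l)) =
      cl ^ (∑ i : J, mm i) *
        Complex.exp (gl * ((∑ i : J, (mm i : ℂ) * xx i) + (∑ i : J, (mm i : ℂ) ^ 2) * (z + l / 2))) *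
        ∏ i : J, θ (xx i + mm i * z) := by
  have h1 : ∀ i : J, θ (xx i + mm i * (z + l)) =
      cl ^ mm i * Complex.exp ((mm i : ℂ) * gl * ((xx i + mm i * z) + (mm i : ℂ) * l / 2)) *
        θ (xx i + mm i * z) := by
    intro i
    have h := theta_iterate_aux θ cl gl l hcl hfe (mm i) (xx i + mm i * z)
    rw [← h]
    congr 1
    ring
  rw [Finset.prod_congr rfl (fun i _ => h1 i), Finset.prod_mul_distrib, Finset.prod_mul_distrib,
    prod_zpow_sum_aux _ cl hcl, ← Complex.exp_sum]
  congr 2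
  rw [Finset.sum_congr rfl (fun i _ =>
      show (mm i : ℂ) * gl * ((xx i + mm i * z) + (mm i : ℂ) * l / 2) =
        gl * ((mm i : ℂ) * xx i) + gl * ((mm i : ℂ) ^ 2 * (z + l / 2)) from by ring),
    Finset.sum_add_distrib, ← Finset.mul_sum, ← Finset.mul_sum, ← Finset.sum_mul]
  ring

theorem neg_one_zpow_congr_aux (a b : ℤ) (h : a ≡ b [ZMOD 2]) : (-1 : ℂ) ^ a = (-1 : ℂ) ^ b := by
  obtain ⟨k, hk⟩ := Int.ModEq.dvd h
  have hb : b = a + 2 * k := by linarith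
  subst hb
  rw [zpow_add₀ (by norm_num : (-1 : ℂ) ≠ 0), zpow_mul]
  norm_num

theorem transition_function_elliptic
    (ω₁ ω₂ : ℂ) (hindep : LinearIndependent ℝ ![ω₁, ω₂])
    (Λ : AddSubgroup ℂ) (hΛ : ∀ z : ℂ, z ∈ Λ ↔ ∃ a b : ℤ, z = a * ω₁ + b * ω₂)
    (θ γ c : ℂ → ℂ)
    (U : Set ℂ) (hUopen : IsOpen U) (hUne : U.Nonempty)
    (hθU : ∀ z ∈ U, θ z ≠ 0)
    (hc : ∀ l ∈ Λ, c l = 1 ∨ c l = -1)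
    (hfe : ∀ z : ℂ, ∀ l ∈ Λ, θ (z + l) = c l * Complex.exp (γ l * (z + l / 2)) * θ z)
    (I I' : Type*) [Fintype I] [Fintype I']
    (m : I → ℤ) (m' : I' → ℤ) (x : I → ℂ) (x' : I' → ℂ)
    (hmod : (∑ i : I, m i) ≡ (∑ i : I', m' i) [ZMOD 2])
    (hsq : ∑ i : I, (m i) ^ 2 = ∑ i : I', (m' i) ^ 2)
    (hlin : ∑ i : I, (m i : ℂ) * x i = ∑ i : I', (m' i : ℂ) * x' i) :
    ∀ l ∈ Λ, ∀ z : ℂ,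
      (∏ i : I', θ (x' i + m' i * (z + l))) * ∏ i : I, θ (x i + m i * z) =
        (∏ i : I', θ (x' i + m' i * z)) * ∏ i : I, θ (x i + m i * (z + l)) := by
  intro l hl z
  have hcl : c l ≠ 0 := by rcases hc l hl with h | h <;> rw [h] <;> norm_num
  have hfel : ∀ w : ℂ, θ (w + l) = c l * Complex.exp (γ l * (w + l / 2)) * θ w :=
    fun w => hfe w l hl
  rw [prod_shift_aux θ (c l) (γ l) l hcl hfel I' m' x' z,
    prod_shift_aux θ (c l) (γ l) l hcl hfel I m x z]
  have hQ : (∑ i : I', ((m' i : ℂ)) ^ 2) = ∑ i : I, ((m i : ℂ)) ^ 2 := by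
    exact_mod_cast hsq.symm
  have hS : (c l) ^ (∑ i : I', m' i) = (c l) ^ (∑ i : I, m i) := by
    rcases hc l hl with h | h
    · rw [h]; simp
    · rw [h]; exact neg_one_zpow_congr_aux _ _ hmod.symm
  rw [← hlin, hQ, hS]
  ring
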